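/- Let μ : ℝ → ℂ be a unit-speed C² plane curve with Euclidean curvature κ_E(s) = Im(μ̄'(s) μ''(s))·(sign convention: κ_E = -Im(μ' μ̄'')). Then the mean curvature of the ideal cone f(s,t) = [[e^t + e^{-t}|μ|², -e^{-t}μ],[-e^{-t}μ̄, e^{-t}]] equals H(s,t) = -(1/2) e^{t} κ_E(s); in particular, along each line s = const (which is a unit-speed asymptotic geodesic in the parameter t) the mean curvature is proportional to e^t. -/

import Mathlib

open Matrix

/-- The ideal cone with vertex ∞ over the plane curve μ, in the Hermitian model. -/
noncomputable def fIC (μ : ℝ → ℂ) (s t : ℝ) : Matrix (Fin 2) (Fin 2) ℂ :=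
  !![(Real.exp t : ℂ) + (Real.exp (-t) : ℂ) * (‖μ s‖^2 : ℝ),
     -((Real.exp (-t) : ℂ) * μ s);
     -((Real.exp (-t) : ℂ) * star (μ s)), (Real.exp (-t) : ℂ)]

/-- The unit normal vector field of the ideal cone `fIC`. -/
noncomputable def nuIC (μ dμ : ℝ → ℂ) (s : ℝ) : Matrix (Fin 2) (Fin 2) ℂ :=
  !![((2 * (star (μ s) * dμ s).im : ℝ) : ℂ), Complex.I * dμ s;
     -(Complex.I * star (dμ s)), 0]

/-- The Minkowski inner product ⟨X,Y⟩ = -(1/2) trace (X Ỹ) on Herm(2). -/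
noncomputable def minkM (X Y : Matrix (Fin 2) (Fin 2) ℂ) : ℂ :=
  -(1/2 : ℂ) * (X * Y.adjugate).trace

lemma im_cast_eq (z : ℂ) : (z.im : ℂ) = -Complex.I * (z - star z) / 2 := by
  have h := Complex.sub_conj z
  rw [show (starRingEnd ℂ) z = star z from rfl] at h
  push_cast at h
  have hI := Complex.I_sq
  rw [eq_div_iff (two_ne_zero (α := ℂ))]
  linear_combination Complex.I * h + 2 * (z.im : ℂ) * hI

theorem stmt_15 (μ dμ ddμ : ℝ → ℂ)
    (hdμ : ∀ s, HasDerivAt μ (dμ s) s) (hddμ : ∀ s, HasDerivAt dμ (ddμ s) s)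
    (hunit : ∀ s, ‖dμ s‖ = 1)
    (s t : ℝ) (fs νs : Matrix (Fin 2) (Fin 2) ℂ)
    (hfs : ∀ i j, HasDerivAt (fun u => fIC μ u t i j) (fs i j) s)
    (hνs : ∀ i j, HasDerivAt (fun u => nuIC μ dμ u i j) (νs i j) s) :
    (1/2 : ℂ) * (-(minkM νs fs)) / minkM fs fs =
      ((-(1/2) * Real.exp t * (-((dμ s * star (ddμ s)).im)) : ℝ) : ℂ) := by
  set E : ℂ := (Real.exp (-t) : ℂ) with hE
  -- entry values of fs
  have hf01 : fs 0 1 = -(E * dμ s) := by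
    have h : HasDerivAt (fun u => fIC μ u t 0 1) (-(E * dμ s)) s := by
      have : HasDerivAt (fun u => -(E * μ u)) (-(E * dμ s)) s :=
        ((hdμ s).const_mul E).neg
      exact this.congr_deriv rfl
    exact (hfs 0 1).unique h
  have hf10 : fs 1 0 = -(E * star (dμ s)) := by
    have h : HasDerivAt (fun u => -(E * star (μ u))) (-(E * star (dμ s))) s :=
      (((hdμ s).star).const_mul E).neg
    exact (hfs 1 0).unique h
  have hf11 : fs 1 1 = 0 := by
    have h : HasDerivAt (fun _ : ℝ => E) 0 s := hasDerivAt_const s E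
    exact (hfs 1 1).unique h
  have hν01 : νs 0 1 = Complex.I * ddμ s := by
    have h : HasDerivAt (fun u => Complex.I * dμ u) (Complex.I * ddμ s) s :=
      (hddμ s).const_mul Complex.I
    exact (hνs 0 1).unique h
  have hν10 : νs 1 0 = -(Complex.I * star (ddμ s)) := by
    have h : HasDerivAt (fun u => -(Complex.I * star (dμ u)))
        (-(Complex.I * star (ddμ s))) s :=
      (((hddμ s).star).const_mul Complex.I).neg
    exact (hνs 1 0).unique h
  have hν11 : νs 1 1 = 0 := by
    have h : HasDerivAt (fun _ : ℝ => (0 : ℂ)) 0 s := hasDerivAt_const s 0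
    exact (hνs 1 1).unique h
  have hb : dμ s * star (dμ s) = 1 := by
    have : dμ s * (starRingEnd ℂ) (dμ s) = ((Complex.normSq (dμ s) : ℝ) : ℂ) :=
      Complex.mul_conj _
    rw [show star (dμ s) = (starRingEnd ℂ) (dμ s) from rfl, this,
      Complex.normSq_eq_norm_sq, hunit s]
    norm_num
  have hEexp : (Real.exp t : ℂ) * E = 1 := by
    rw [hE]
    norm_cast
    rw [← Real.exp_add]
    simp
  have hEne : E ≠ 0 := by
    rw [hE]
    exact_mod_cast (Real.exp_pos _).ne'
  have hden : minkM fs fs = E^2 := by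
    simp only [minkM, Matrix.adjugate_fin_two, Matrix.trace_fin_two,
      Matrix.mul_apply, Fin.sum_univ_two, Matrix.of_apply, Matrix.cons_val', Matrix.cons_val_zero,
      Matrix.cons_val_one, Matrix.head_cons, Matrix.head_fin_const,
      Matrix.empty_val', Matrix.cons_val_fin_one, hf01, hf10, hf11]
    linear_combination (E^2) * hb
  have hnum : minkM νs fs = -(1/2) * Complex.I * E *
      (ddμ s * star (dμ s) - star (ddμ s) * dμ s) := by
    simp only [minkM, Matrix.adjugate_fin_two, Matrix.trace_fin_two,
      Matrix.mul_apply, Fin.sum_univ_two, Matrix.of_apply, Matrix.cons_val', Matrix.cons_val_zero,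
      Matrix.cons_val_one, Matrix.head_cons, Matrix.head_fin_const,
      Matrix.empty_val', Matrix.cons_val_fin_one, hf01, hf10, hf11, hν01, hν10, hν11]
    ring
  have hstar : star (dμ s * star (ddμ s)) = ddμ s * star (dμ s) := by
    rw [StarMul.star_mul, star_star]
  rw [hnum, hden, div_eq_iff (pow_ne_zero 2 hEne)]
  push_cast
  rw [im_cast_eq, hstar]
  push_cast at hEexp
  linear_combination (-(1/4) * Complex.I *
    (ddμ s * star (dμ s) - star (ddμ s) * dμ s) * E) * hEexp
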